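/- Let λ₁ < λ₂ < ⋯ < λₙ be real numbers. Then the iterated integral ∫₀¹ ∫₀^{1−x₁} ⋯ ∫₀^{1−x₁−⋯−x_{n−2}} exp(−(λ₁x₁ + ⋯ + λ_{n−1}x_{n−1} + λₙ(1−x₁−⋯−x_{n−1}))) dx_{n−1} ⋯ dx₂ dx₁ equals Σ_{i=1}^{n} e^{−λᵢ} / ∏_{j≠i} (λⱼ − λᵢ). -/

import Mathlib

open MeasureTheory Finset Polynomial

section Aux

lemma leadingCoeff_lagrange_basis {F ι : Type*} [Field F] [DecidableEq ι]
    (s : Finset ι) (v : ι → F) (i : ι) :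
    (Lagrange.basis s v i).leadingCoeff = ∏ j ∈ s.erase i, (v i - v j)⁻¹ := by
  rw [Lagrange.basis, leadingCoeff_prod]
  refine Finset.prod_congr rfl fun j _ => ?_
  rw [Lagrange.basisDivisor, leadingCoeff_mul, leadingCoeff_C,
    (monic_X_sub_C (v j)).leadingCoeff, mul_one]

lemma sum_nodalWeight_eq_zero {F ι : Type*} [Field F] [DecidableEq ι]
    {s : Finset ι} {v : ι → F} (hvs : Set.InjOn v s) (hcard : 2 ≤ s.card) :
    ∑ i ∈ s, ∏ j ∈ s.erase i, (v i - v j)⁻¹ = 0 := by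
  have hne : s.Nonempty := Finset.card_pos.mp (by omega)
  have h := Lagrange.sum_basis hvs hne
  have h2 := congrArg (fun p : F[X] => p.coeff (s.card - 1)) h
  simp only [finset_sum_coeff] at h2
  rw [show ((1 : F[X]).coeff (s.card - 1)) = 0 by
    rw [Polynomial.coeff_one]; simp; omega] at h2
  rw [← h2]
  refine Finset.sum_congr rfl fun i hi => ?_
  rw [← leadingCoeff_lagrange_basis s v i, ← Lagrange.natDegree_basis hvs hi,
    Polynomial.coeff_natDegree]

/-- The divided-difference identity `∑ᵢ ∏_{j≠i} (vⱼ - vᵢ)⁻¹ = 0` for `≥ 2` nodes. -/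
lemma sum_inv_prod_sub_eq_zero {k : ℕ} {v : Fin (k + 2) → ℝ} (hv : Function.Injective v) :
    ∑ m : Fin (k + 2), (∏ j ∈ Finset.univ.erase m, (v j - v m))⁻¹ = 0 := by
  have hcard : 2 ≤ (Finset.univ : Finset (Fin (k + 2))).card := by
    simp [Finset.card_univ]
  have h := sum_nodalWeight_eq_zero (s := (Finset.univ : Finset (Fin (k + 2)))) (v := v)
    hv.injOn hcard
  have heach : ∀ m : Fin (k + 2),
      (∏ j ∈ Finset.univ.erase m, (v j - v m))⁻¹
        = (-1 : ℝ) ^ (k + 1) * ∏ j ∈ Finset.univ.erase m, (v m - v j)⁻¹ := by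
    intro m
    have h1 : ∏ j ∈ Finset.univ.erase m, (v j - v m)
        = ∏ j ∈ Finset.univ.erase m, ((-1) * (v m - v j)) :=
      Finset.prod_congr rfl fun j _ => by ring
    have hc : (Finset.univ.erase m).card = k + 1 := by
      rw [Finset.card_erase_of_mem (Finset.mem_univ m)]; simp
    rw [h1, Finset.prod_mul_distrib, Finset.prod_const, hc, mul_inv,
      ← Finset.prod_inv_distrib]
    congr 1
    rw [show ((-1 : ℝ) ^ (k + 1))⁻¹ = ((-1 : ℝ)⁻¹) ^ (k + 1) by rw [inv_pow]]
    norm_num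
  calc ∑ m : Fin (k + 2), (∏ j ∈ Finset.univ.erase m, (v j - v m))⁻¹
      = (-1 : ℝ) ^ (k + 1) * ∑ m : Fin (k + 2), ∏ j ∈ Finset.univ.erase m, (v m - v j)⁻¹ := by
        rw [Finset.mul_sum]; exact Finset.sum_congr rfl fun m _ => heach m
    _ = 0 := by rw [h, mul_zero]

lemma prod_erase_succ {k : ℕ} (g : Fin (k + 2) → ℝ) (i : Fin (k + 1)) :
    ∏ j ∈ Finset.univ.erase i.succ, g j
      = g 0 * ∏ j ∈ Finset.univ.erase i, g j.succ := by
  have h0 : (0 : Fin (k + 2)) ∈ Finset.univ.erase i.succ :=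
    Finset.mem_erase.2 ⟨(Fin.succ_ne_zero i).symm, Finset.mem_univ _⟩
  rw [← Finset.mul_prod_erase _ g h0]
  congr 1
  rw [show ((Finset.univ.erase i.succ).erase 0 : Finset (Fin (k + 2)))
      = (Finset.univ.erase i).map (Fin.succEmb (k + 1)) from ?_, Finset.prod_map]
  · rfl
  · ext j
    simp only [Finset.mem_erase, Finset.mem_univ, and_true, Finset.mem_map, Fin.succEmb]
    constructor
    · rintro ⟨hj0, hji⟩
      obtain ⟨l, rfl⟩ := Fin.exists_succ_eq.2 hj0
      exact ⟨l, fun h => hji (by rw [h]), rfl⟩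
    · rintro ⟨l, hl, rfl⟩
      exact ⟨Fin.succ_ne_zero l, fun h => hl (Fin.succ_injective _ h)⟩

lemma integral_exp_mul_self (c a : ℝ) (hc : c ≠ 0) :
    ∫ t in (0 : ℝ)..a, Real.exp (c * t) = (Real.exp (c * a) - 1) / c := by
  have hderiv : ∀ t ∈ Set.uIcc (0 : ℝ) a,
      HasDerivAt (fun t => Real.exp (c * t) / c) (Real.exp (c * t)) t := by
    intro t _
    have h1 : HasDerivAt (fun t : ℝ => c * t) c t := by
      simpa using (hasDerivAt_id t).const_mul c
    have := (h1.exp).div_const c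
    simpa [mul_comm, mul_div_assoc, mul_div_cancel_left₀ _ hc] using this
  rw [intervalIntegral.integral_eq_sub_of_hasDerivAt hderiv
    ((Real.continuous_exp.comp (continuous_const.mul continuous_id)).intervalIntegrable 0 a)]
  simp [sub_div]

lemma simplex_closed (k : ℕ) (a : ℝ) :
    IsClosed {x : Fin k → ℝ | (∀ i, 0 ≤ x i) ∧ ∑ i, x i ≤ a} := by
  have h1 : IsClosed {x : Fin k → ℝ | ∀ i, 0 ≤ x i} := by
    rw [Set.setOf_forall]
    exact isClosed_iInter fun i => isClosed_le continuous_const (continuous_apply i)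
  have h2 : IsClosed {x : Fin k → ℝ | ∑ i, x i ≤ a} :=
    isClosed_le (continuous_finset_sum _ fun i _ => continuous_apply i) continuous_const
  exact (Set.setOf_and (q := fun x : Fin k → ℝ => ∑ i, x i ≤ a)) ▸ h1.inter h2

lemma simplex_compact (k : ℕ) (a : ℝ) :
    IsCompact {x : Fin k → ℝ | (∀ i, 0 ≤ x i) ∧ ∑ i, x i ≤ a} := by
  refine IsCompact.of_isClosed_subset (isCompact_Icc (a := (0 : Fin k → ℝ)) (b := fun _ => a))
    (simplex_closed k a) ?_
  rintro x ⟨hx0, hxs⟩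
  refine ⟨fun i => hx0 i, fun i => ?_⟩
  exact le_trans (Finset.single_le_sum (fun j _ => hx0 j) (Finset.mem_univ i)) hxs

end Aux

lemma indicator_cons_eq (k : ℕ) (mu : Fin (k + 2) → ℝ) (a t : ℝ) (ht0 : 0 ≤ t)
    (y : Fin k → ℝ) :
    Set.indicator {x : Fin (k + 1) → ℝ | (∀ i, 0 ≤ x i) ∧ ∑ i, x i ≤ a}
      (fun x => Real.exp (-((∑ i : Fin (k + 1), mu i.castSucc * x i) +
        mu (Fin.last (k + 1)) * (a - ∑ i, x i)))) (Fin.cons t y)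
    = Set.indicator {y : Fin k → ℝ | (∀ i, 0 ≤ y i) ∧ ∑ i, y i ≤ a - t}
      (fun y => Real.exp (-(mu 0 * t)) *
        Real.exp (-((∑ i : Fin k, mu i.castSucc.succ * y i) +
          mu (Fin.last k).succ * ((a - t) - ∑ i, y i)))) y := by
  have hmem : ((Fin.cons t y : Fin (k + 1) → ℝ) ∈
      {x : Fin (k + 1) → ℝ | (∀ i, 0 ≤ x i) ∧ ∑ i, x i ≤ a}) ↔
      (y ∈ {y : Fin k → ℝ | (∀ i, 0 ≤ y i) ∧ ∑ i, y i ≤ a - t}) := by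
    simp only [Set.mem_setOf_eq, Fin.forall_fin_succ, Fin.cons_zero, Fin.cons_succ, Fin.sum_cons]
    constructor
    · rintro ⟨⟨-, h1⟩, h2⟩; exact ⟨h1, by linarith⟩
    · rintro ⟨h1, h2⟩; exact ⟨⟨ht0, h1⟩, by linarith⟩
  have hval : Real.exp (-((∑ i : Fin (k + 1), mu i.castSucc * (Fin.cons t y : Fin (k+1) → ℝ) i) +
        mu (Fin.last (k + 1)) * (a - ∑ i, (Fin.cons t y : Fin (k+1) → ℝ) i)))
      = Real.exp (-(mu 0 * t)) *
        Real.exp (-((∑ i : Fin k, mu i.castSucc.succ * y i) +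
          mu (Fin.last k).succ * ((a - t) - ∑ i, y i))) := by
    rw [← Real.exp_add]
    congr 1
    rw [Fin.sum_univ_succ, Fin.sum_cons]
    simp only [Fin.cons_zero, Fin.cons_succ, Fin.castSucc_zero, Fin.succ_last, Fin.succ_castSucc]
    ring
  rw [Set.indicator, Set.indicator]
  by_cases hy : (Fin.cons t y : Fin (k + 1) → ℝ) ∈
      {x : Fin (k + 1) → ℝ | (∀ i, 0 ≤ x i) ∧ ∑ i, x i ≤ a}
  · rw [if_pos hy, if_pos (hmem.1 hy), hval]
  · rw [if_neg hy, if_neg fun h => hy (hmem.2 h)]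

lemma indicator_cons_eq_zero (k : ℕ) (mu : Fin (k + 2) → ℝ) (a t : ℝ)
    (ht : t ∉ Set.Icc (0 : ℝ) a) (y : Fin k → ℝ) :
    Set.indicator {x : Fin (k + 1) → ℝ | (∀ i, 0 ≤ x i) ∧ ∑ i, x i ≤ a}
      (fun x => Real.exp (-((∑ i : Fin (k + 1), mu i.castSucc * x i) +
        mu (Fin.last (k + 1)) * (a - ∑ i, x i)))) (Fin.cons t y) = 0 := by
  rw [Set.indicator_of_notMem]
  rintro ⟨h0, hs⟩
  rw [Set.mem_Icc] at ht
  push_neg at ht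
  have h0t : (0 : ℝ) ≤ t := by simpa using h0 0
  have hsum0 : 0 ≤ ∑ i : Fin k, y i := by
    refine Finset.sum_nonneg fun i _ => ?_
    simpa using h0 i.succ
  rw [Fin.sum_cons] at hs
  have := ht h0t
  linarith

/-- The key iterated-integral computation, by induction on the dimension. -/
lemma simplex_exp_integral : ∀ (k : ℕ) (mu : Fin (k + 1) → ℝ), Function.Injective mu →
    ∀ a : ℝ, 0 ≤ a →
    (∫ x in {x : Fin k → ℝ | (∀ i, 0 ≤ x i) ∧ ∑ i, x i ≤ a},
        Real.exp (-((∑ i : Fin k, mu i.castSucc * x i) + mu (Fin.last k) * (a - ∑ i, x i))))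
      = ∑ i, Real.exp (-(a * mu i)) / ∏ j ∈ Finset.univ.erase i, (mu j - mu i) := by
  intro k
  induction k with
  | zero =>
    intro mu _ a ha
    have hset : {x : Fin 0 → ℝ | (∀ i, 0 ≤ x i) ∧ ∑ i, x i ≤ a} = Set.univ := by
      ext x; simp [ha]
    rw [hset, Measure.restrict_univ]
    have h1 : (volume : Measure (Fin 0 → ℝ)) Set.univ = 1 := by
      rw [MeasureTheory.volume_pi, Measure.pi_univ]; simp
    simp only [Finset.univ_eq_empty, Finset.sum_empty, sub_zero, zero_add]
    rw [MeasureTheory.integral_const, Measure.real, h1]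
    simp [Fin.last, mul_comm]
  | succ k IH =>
    intro mu hmu a ha
    have hmu' : Function.Injective (fun i : Fin (k + 1) => mu i.succ) :=
      fun i j h => Fin.succ_injective _ (hmu h)
    have hPne : ∀ i : Fin (k + 1),
        (∏ j ∈ Finset.univ.erase i, (mu j.succ - mu i.succ)) ≠ 0 := by
      intro i
      refine Finset.prod_ne_zero_iff.2 fun j hj => sub_ne_zero.2 fun h => ?_
      exact (Finset.mem_erase.1 hj).1 (Fin.succ_injective _ (hmu h))
    have hcne : ∀ i : Fin (k + 1), mu i.succ - mu 0 ≠ 0 := fun i =>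
      sub_ne_zero.2 fun h => (Fin.succ_ne_zero i) (hmu h)
    have hSm : MeasurableSet {x : Fin (k + 1) → ℝ | (∀ i, 0 ≤ x i) ∧ ∑ i, x i ≤ a} :=
      (simplex_closed _ a).measurableSet
    have hfc : Continuous (fun x : Fin (k + 1) → ℝ =>
        Real.exp (-((∑ i : Fin (k + 1), mu i.castSucc * x i) +
          mu (Fin.last (k + 1)) * (a - ∑ i, x i)))) := by
      apply Real.continuous_exp.comp
      apply Continuous.neg
      exact ((continuous_finset_sum _ fun i _ => continuous_const.mul (continuous_apply i)).add
        (continuous_const.mul (continuous_const.sub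
          (continuous_finset_sum _ fun i _ => continuous_apply i))))
    have hInt : Integrable (Set.indicator
        {x : Fin (k + 1) → ℝ | (∀ i, 0 ≤ x i) ∧ ∑ i, x i ≤ a}
        (fun x => Real.exp (-((∑ i : Fin (k + 1), mu i.castSucc * x i) +
          mu (Fin.last (k + 1)) * (a - ∑ i, x i))))) :=
      (integrable_indicator_iff hSm).2
        (hfc.continuousOn.integrableOn_compact (simplex_compact _ a))
    rw [← MeasureTheory.integral_indicator hSm]
    rw [MeasureTheory.volume_pi (α := fun _ : Fin (k + 1) => ℝ)]
    rw [← ((measurePreserving_piFinSuccAbove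
      (fun _ : Fin (k + 1) => (volume : Measure ℝ)) 0).symm).integral_comp']
    have hG : Integrable (fun p : ℝ × (Fin k → ℝ) =>
        Set.indicator {x : Fin (k + 1) → ℝ | (∀ i, 0 ≤ x i) ∧ ∑ i, x i ≤ a}
          (fun x => Real.exp (-((∑ i : Fin (k + 1), mu i.castSucc * x i) +
            mu (Fin.last (k + 1)) * (a - ∑ i, x i))))
          ((MeasurableEquiv.piFinSuccAbove (fun _ : Fin (k + 1) => ℝ) 0).symm p))
        ((volume : Measure ℝ).prod (Measure.pi fun _ => (volume : Measure ℝ))) := by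
      have := ((measurePreserving_piFinSuccAbove
        (fun _ : Fin (k + 1) => (volume : Measure ℝ)) 0).symm).integrable_comp_emb
        (MeasurableEquiv.measurableEmbedding _)
        (g := Set.indicator {x : Fin (k + 1) → ℝ | (∀ i, 0 ≤ x i) ∧ ∑ i, x i ≤ a}
          (fun x => Real.exp (-((∑ i : Fin (k + 1), mu i.castSucc * x i) +
            mu (Fin.last (k + 1)) * (a - ∑ i, x i)))))
      exact this.2 hInt
    rw [MeasureTheory.integral_prod _ hG]
    have hcons : ∀ (t : ℝ) (y : Fin k → ℝ),
        (MeasurableEquiv.piFinSuccAbove (fun _ : Fin (k + 1) => ℝ) 0).symm (t, y)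
          = Fin.cons t y := by
      intro t y
      simp [MeasurableEquiv.piFinSuccAbove_symm_apply, Fin.insertNthEquiv, Fin.insertNth_zero']
    have hinner : ∀ t : ℝ,
        (∫ y : Fin k → ℝ, Set.indicator
            {x : Fin (k + 1) → ℝ | (∀ i, 0 ≤ x i) ∧ ∑ i, x i ≤ a}
            (fun x => Real.exp (-((∑ i : Fin (k + 1), mu i.castSucc * x i) +
              mu (Fin.last (k + 1)) * (a - ∑ i, x i))))
            ((MeasurableEquiv.piFinSuccAbove (fun _ : Fin (k + 1) => ℝ) 0).symm (t, y))
          ∂(Measure.pi fun _ => (volume : Measure ℝ)))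
        = Set.indicator (Set.Icc 0 a) (fun t => ∑ i : Fin (k + 1),
            Real.exp (-(mu 0 * t) - (a - t) * mu i.succ)
              / ∏ j ∈ Finset.univ.erase i, (mu j.succ - mu i.succ)) t := by
      intro t
      by_cases ht : t ∈ Set.Icc (0 : ℝ) a
      · obtain ⟨ht0, hta⟩ := ht
        simp only [hcons, indicator_cons_eq k mu a t ht0]
        have hIH := IH (fun i : Fin (k + 1) => mu i.succ) hmu' (a - t) (by linarith)
        rw [← MeasureTheory.volume_pi,
          MeasureTheory.integral_indicator (simplex_closed k (a - t)).measurableSet,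
          MeasureTheory.integral_const_mul, hIH,
          Set.indicator_of_mem (Set.mem_Icc.2 ⟨ht0, hta⟩), Finset.mul_sum]
        refine Finset.sum_congr rfl fun i _ => ?_
        rw [← mul_div_assoc, ← Real.exp_add]
        congr 2
      · simp only [hcons, indicator_cons_eq_zero k mu a t ht, MeasureTheory.integral_zero]
        rw [Set.indicator_of_notMem ht]
    rw [MeasureTheory.integral_congr_ae (Filter.Eventually.of_forall hinner)]
    rw [MeasureTheory.integral_indicator measurableSet_Icc,
      MeasureTheory.integral_Icc_eq_integral_Ioc, ← intervalIntegral.integral_of_le ha]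
    rw [intervalIntegral.integral_finset_sum
      (f := fun (i : Fin (k + 1)) (t : ℝ) => Real.exp (-(mu 0 * t) - (a - t) * mu i.succ)
        / ∏ j ∈ Finset.univ.erase i, (mu j.succ - mu i.succ))
      (fun i _ => Continuous.intervalIntegrable (by fun_prop) 0 a)]
    have hterm : ∀ i : Fin (k + 1),
        (∫ t in (0:ℝ)..a, Real.exp (-(mu 0 * t) - (a - t) * mu i.succ)
            / ∏ j ∈ Finset.univ.erase i, (mu j.succ - mu i.succ))
          = (Real.exp (-(a * mu i.succ)) *
              ((Real.exp ((mu i.succ - mu 0) * a) - 1) / (mu i.succ - mu 0)))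
            / ∏ j ∈ Finset.univ.erase i, (mu j.succ - mu i.succ) := by
      intro i
      rw [intervalIntegral.integral_div]
      congr 1
      have hrw : ∀ t : ℝ, Real.exp (-(mu 0 * t) - (a - t) * mu i.succ)
          = Real.exp (-(a * mu i.succ)) * Real.exp ((mu i.succ - mu 0) * t) := by
        intro t; rw [← Real.exp_add]; congr 1; ring
      simp_rw [hrw]
      rw [intervalIntegral.integral_const_mul, integral_exp_mul_self _ _ (hcne i)]
    simp only [hterm]
    have hQsucc : ∀ i : Fin (k + 1),
        (∏ j ∈ Finset.univ.erase i.succ, (mu j - mu i.succ))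
          = (mu 0 - mu i.succ) * ∏ j ∈ Finset.univ.erase i, (mu j.succ - mu i.succ) :=
      fun i => prod_erase_succ (fun j => mu j - mu i.succ) i
    have hid : ∑ m : Fin (k + 2), (∏ j ∈ Finset.univ.erase m, (mu j - mu m))⁻¹ = 0 :=
      sum_inv_prod_sub_eq_zero hmu
    rw [Fin.sum_univ_succ] at hid
    have hQ0ne : (∏ j ∈ Finset.univ.erase (0 : Fin (k+2)), (mu j - mu 0)) ≠ 0 := by
      refine Finset.prod_ne_zero_iff.2 fun j hj => sub_ne_zero.2 fun h => ?_
      exact (Finset.mem_erase.1 hj).1 (hmu h)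
    have hterm2 : ∀ i : Fin (k + 1),
        (Real.exp (-(a * mu i.succ)) *
            ((Real.exp ((mu i.succ - mu 0) * a) - 1) / (mu i.succ - mu 0)))
          / ∏ j ∈ Finset.univ.erase i, (mu j.succ - mu i.succ)
        = Real.exp (-(a * mu i.succ)) *
            (∏ j ∈ Finset.univ.erase i.succ, (mu j - mu i.succ))⁻¹
          - Real.exp (-(a * mu 0)) *
            (∏ j ∈ Finset.univ.erase i.succ, (mu j - mu i.succ))⁻¹ := by
      intro i
      have hE : Real.exp (-(a * mu i.succ)) * Real.exp ((mu i.succ - mu 0) * a)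
          = Real.exp (-(a * mu 0)) := by
        rw [← Real.exp_add]; congr 1; ring
      have hc := hcne i
      have hP := hPne i
      have h0 : mu 0 - mu i.succ ≠ 0 := fun h => hc (by linarith)
      rw [hQsucc i, ← mul_div_assoc, mul_sub, hE, mul_one]
      field_simp
      ring
    simp only [hterm2]
    rw [Finset.sum_sub_distrib, ← Finset.mul_sum,
      Fin.sum_univ_succ (f := fun m : Fin (k + 2) =>
        Real.exp (-(a * mu m)) / ∏ j ∈ Finset.univ.erase m, (mu j - mu m))]
    have hsum' : ∑ i : Fin (k + 1),
        (∏ j ∈ Finset.univ.erase i.succ, (mu j - mu i.succ))⁻¹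
        = -(∏ j ∈ Finset.univ.erase (0 : Fin (k+2)), (mu j - mu 0))⁻¹ := by
      linarith
    rw [hsum']
    simp only [div_eq_mul_inv]
    ring

theorem integral_exp_simplex_eq_sum
    (n : ℕ) (hn : 1 ≤ n) (lam : Fin n → ℝ) (hmono : StrictMono lam) :
    (∫ x in {x : Fin (n - 1) → ℝ | (∀ i, 0 ≤ x i) ∧ ∑ i, x i ≤ 1},
        Real.exp (-((∑ i : Fin (n - 1), lam (Fin.castLE (by omega) i) * x i) +
          lam ⟨n - 1, by omega⟩ * (1 - ∑ i, x i))))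
      = ∑ i, Real.exp (-lam i) / ∏ j ∈ Finset.univ.erase i, (lam j - lam i) := by
  obtain ⟨k, rfl⟩ : ∃ k, n = k + 1 := ⟨n - 1, by omega⟩
  have h := simplex_exp_integral k lam hmono.injective 1 zero_le_one
  simp only [Nat.add_sub_cancel] at *
  simp only [one_mul] at h
  exact h
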